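/- Let B ≥ 2 and k ∈ {0,1}^B, and for r ∈ {0,…,B−1} define z_r(k) as follows: z₀(k) = [for all h ∈ {0,…,B−2}: k₀ = 1 or k_{h+1} = 1], and for r ≥ 1, z_r(k) = k_r. Equivalently, with y_h defined via thresholds on w_h(k) minus 2^{B−2}·[r=0] minus 2^{B−1}·[r=h+1], and z = [Σ_{h=0}^{B−2} y_h ≥ B−1]: the resulting vector (z₀(k), …, z_{B−1}(k)) equals (1,1,…,1) if k = (0,1,1,…,1), and equals k otherwise. -/

import Mathlib

/-- `Int` of the binary string `k` with the bit at position `t` moved to the front. -/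
def moveFrontInt (B : ℕ) (t : Fin B) (k : Fin B → Bool) : ℕ :=
  (if k t then 2 ^ (B - 1) else 0) +
    ∑ i : Fin B,
      if i.val < t.val then (if k i then 2 ^ (B - 2 - i.val) else 0)
      else if t.val < i.val then (if k i then 2 ^ (B - 1 - i.val) else 0)
      else 0

/-- The block-decoding map of the approximate decoder: defining
`z₀(k) = [∀ h ≤ B-2, k₀ = 1 ∨ k_{h+1} = 1]` and `z_r(k) = k_r` for `r ≥ 1`,
or equivalently via the threshold gates
`y_h = [w_h(k) - 2^{B-2}·[r=0] - 2^{B-1}·[r=h+1] ≥ 0]` and `z = [Σ_h y_h ≥ B-1]`,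
the resulting vector equals `(1,…,1)` when `k = (0,1,…,1)` and equals `k` otherwise. -/
lemma sd16_geom_lt (m : ℕ) : ∑ j ∈ Finset.range m, 2 ^ j < 2 ^ m := by
  induction m with
  | zero => simp
  | succ n ih => rw [Finset.sum_range_succ, pow_succ]; omega

lemma sd16_pow_sum_lt {n m : ℕ} (f e : Fin n → ℕ)
    (hf : ∀ i, f i = 0 ∨ f i = 2 ^ e i)
    (he : ∀ i, f i ≠ 0 → e i < m)
    (hinj : ∀ i j, f i ≠ 0 → f j ≠ 0 → e i = e j → i = j) :
    ∑ i, f i < 2 ^ m := by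
  classical
  calc ∑ i, f i = ∑ i ∈ Finset.univ.filter (fun i => f i ≠ 0), f i :=
        (Finset.sum_filter_ne_zero _).symm
    _ = ∑ i ∈ Finset.univ.filter (fun i => f i ≠ 0), 2 ^ e i := by
        apply Finset.sum_congr rfl; intro i hi
        rcases hf i with h | h
        · exact absurd h (by simpa using (Finset.mem_filter.mp hi).2)
        · exact h
    _ = ∑ j ∈ (Finset.univ.filter (fun i => f i ≠ 0)).image e, 2 ^ j := by
        rw [Finset.sum_image]
        intro i hi j hj
        exact hinj i j (by simpa using hi) (by simpa using hj)
    _ ≤ ∑ j ∈ Finset.range m, 2 ^ j := by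
        apply Finset.sum_le_sum_of_subset
        intro j hj
        rcases Finset.mem_image.mp hj with ⟨i, hi, rfl⟩
        exact Finset.mem_range.mpr (he i (by simpa using hi))
    _ < 2 ^ m := sd16_geom_lt m

-- the tail sum
def sd16_S (B : ℕ) (t : Fin B) (k : Fin B → Bool) : ℕ :=
  ∑ i : Fin B,
      if i.val < t.val then (if k i then 2 ^ (B - 2 - i.val) else 0)
      else if t.val < i.val then (if k i then 2 ^ (B - 1 - i.val) else 0)
      else 0

lemma sd16_ne_t {B : ℕ} {t i : Fin B} {k : Fin B → Bool}
    (h : (if i.val < t.val then (if k i then 2 ^ (B - 2 - i.val) else 0)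
      else if t.val < i.val then (if k i then 2 ^ (B - 1 - i.val) else 0)
      else 0) ≠ 0) : i.val ≠ t.val ∧ k i = true := by
  constructor
  · intro he
    apply h; simp [he]
  · cases hki : k i
    · exfalso; apply h; simp [hki]
    · rfl

lemma sd16_S_lt (B : ℕ) (hB : 2 ≤ B) (t : Fin B) (k : Fin B → Bool) :
    sd16_S B t k < 2 ^ (B - 1) := by
  apply sd16_pow_sum_lt _ (fun i => if i.val < t.val then B - 2 - i.val else B - 1 - i.val)
  · intro i
    by_cases h1 : i.val < t.val <;> by_cases h2 : t.val < i.val <;>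
      cases hki : k i <;> simp [h1, h2, hki]
  · intro i hi
    obtain ⟨hne, -⟩ := sd16_ne_t hi
    have := i.isLt; have := t.isLt
    by_cases h1 : i.val < t.val <;> simp [h1] <;> omega
  · intro i j hi hj hij
    obtain ⟨hne, -⟩ := sd16_ne_t hi
    obtain ⟨hne', -⟩ := sd16_ne_t hj
    have := i.isLt; have := j.isLt; have := t.isLt
    apply Fin.ext
    split_ifs at hij <;> omega

lemma sd16_S_lt' (B : ℕ) (hB : 2 ≤ B) (t : Fin B) (k : Fin B → Bool)
    (ht : 0 < t.val) (h0 : k ⟨0, by omega⟩ = false) :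
    sd16_S B t k < 2 ^ (B - 2) := by
  have hz : ∀ i : Fin B, (if i.val < t.val then (if k i then 2 ^ (B - 2 - i.val) else 0)
      else if t.val < i.val then (if k i then 2 ^ (B - 1 - i.val) else 0)
      else 0) ≠ 0 → i.val ≠ 0 := by
    intro i hi h
    obtain ⟨-, hki⟩ := sd16_ne_t hi
    have : i = ⟨0, by omega⟩ := Fin.ext h
    rw [this] at hki
    rw [h0] at hki; exact Bool.false_ne_true hki
  apply sd16_pow_sum_lt _ (fun i => if i.val < t.val then B - 2 - i.val else B - 1 - i.val)
  · intro i
    by_cases h1 : i.val < t.val <;> by_cases h2 : t.val < i.val <;>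
      cases hki : k i <;> simp [h1, h2, hki]
  · intro i hi
    obtain ⟨hne, -⟩ := sd16_ne_t hi
    have hi0 := hz i hi
    have := i.isLt; have := t.isLt
    by_cases h1 : i.val < t.val <;> simp [h1] <;> omega
  · intro i j hi hj hij
    obtain ⟨hne, -⟩ := sd16_ne_t hi
    obtain ⟨hne', -⟩ := sd16_ne_t hj
    have := i.isLt; have := j.isLt; have := t.isLt
    apply Fin.ext
    split_ifs at hij <;> omega

lemma sd16_S_ge (B : ℕ) (hB : 2 ≤ B) (t : Fin B) (k : Fin B → Bool)
    (ht : 0 < t.val) (h0 : k ⟨0, by omega⟩ = true) :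
    2 ^ (B - 2) ≤ sd16_S B t k := by
  have := Finset.single_le_sum (f := fun i : Fin B =>
      if i.val < t.val then (if k i then 2 ^ (B - 2 - i.val) else 0)
      else if t.val < i.val then (if k i then 2 ^ (B - 1 - i.val) else 0)
      else 0) (fun i _ => Nat.zero_le _) (Finset.mem_univ (⟨0, by omega⟩ : Fin B))
  simpa [ht, h0, sd16_S] using this

lemma sd16_w_ge (B : ℕ) (t : Fin B) (k : Fin B → Bool) (h : k t = true) :
    2 ^ (B - 1) ≤ moveFrontInt B t k := by
  rw [moveFrontInt, if_pos h]; exact Nat.le_add_right _ _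

lemma sd16_w_lt (B : ℕ) (hB : 2 ≤ B) (t : Fin B) (k : Fin B → Bool) (h : k t = false) :
    moveFrontInt B t k < 2 ^ (B - 1) := by
  rw [moveFrontInt, if_neg (by simp [h]), zero_add]
  exact sd16_S_lt B hB t k

lemma sd16_w_ge' (B : ℕ) (hB : 2 ≤ B) (t : Fin B) (k : Fin B → Bool)
    (ht : 0 < t.val) (h0 : k ⟨0, by omega⟩ = true) :
    2 ^ (B - 2) ≤ moveFrontInt B t k := by
  rw [moveFrontInt]
  exact le_trans (sd16_S_ge B hB t k ht h0) (Nat.le_add_left _ _)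

lemma sd16_w_lt' (B : ℕ) (hB : 2 ≤ B) (t : Fin B) (k : Fin B → Bool)
    (ht : 0 < t.val) (h0 : k ⟨0, by omega⟩ = false) (hkt : k t = false) :
    moveFrontInt B t k < 2 ^ (B - 2) := by
  rw [moveFrontInt, if_neg (by simp [hkt]), zero_add]
  exact sd16_S_lt' B hB t k ht h0

theorem stmt_16 (B : ℕ) (hB : 2 ≤ B) (k : Fin B → Bool) :
    let bad : Fin B → Bool := fun i => decide (0 < i.val)
    let zsimple : Fin B → Bool := fun r =>
      if r.val = 0 then decide (∀ t : Fin B, 0 < t.val → (k ⟨0, by omega⟩ = true ∨ k t = true))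
      else k r
    let y : Fin B → Fin B → Bool := fun t r =>
      decide ((0 : ℤ) ≤ (moveFrontInt B t k : ℤ)
        - 2 ^ (B - 2) * (if r.val = 0 then 1 else 0)
        - 2 ^ (B - 1) * (if r = t then 1 else 0))
    let zthresh : Fin B → Bool := fun r =>
      decide (B - 1 ≤ ((Finset.univ.filter fun t : Fin B => 0 < t.val).sum
        fun t => if y t r then 1 else 0))
    zsimple = (if k = bad then (fun _ => true) else k) ∧
    zthresh = (if k = bad then (fun _ => true) else k) := by
  intro bad zsimple y zthresh
  have hB0 : 0 < B := by omega
  have hpow : (2:ℕ) ^ (B - 2) ≤ 2 ^ (B - 1) := Nat.pow_le_pow_right (by norm_num) (by omega)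
  -- step 1 : zsimple = target
  have h1 : zsimple = (if k = bad then (fun _ => true) else k) := by
    funext r
    by_cases hk : k = bad
    · rw [if_pos hk]
      show (if r.val = 0 then decide (∀ t : Fin B, 0 < t.val →
          (k ⟨0, hB0⟩ = true ∨ k t = true)) else k r) = true
      by_cases hr : r.val = 0
      · rw [if_pos hr, decide_eq_true_eq]
        intro t ht
        right
        rw [hk]
        show decide (0 < t.val) = true
        simpa using ht
      · rw [if_neg hr, hk]
        show decide (0 < r.val) = true
        simp; omega
    · rw [if_neg hk]
      show (if r.val = 0 then decide (∀ t : Fin B, 0 < t.val →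
          (k ⟨0, hB0⟩ = true ∨ k t = true)) else k r) = k r
      by_cases hr : r.val = 0
      · rw [if_pos hr]
        have hr0 : r = ⟨0, hB0⟩ := Fin.ext hr
        rw [hr0]
        cases h0 : k ⟨0, hB0⟩
        · rw [decide_eq_false_iff_not]
          intro hall
          apply hk
          funext t
          by_cases ht : 0 < t.val
          · rcases hall t ht with h | h
            · exact absurd h (Bool.false_ne_true)
            · rw [h]
              show _ = decide (0 < t.val)
              simp [ht]
          · have : t = ⟨0, hB0⟩ := Fin.ext (by omega)
            rw [this, h0]
            show _ = decide ((0:ℕ) < 0)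
            simp
        · rw [decide_eq_true_eq]
          intro t ht
          left; rfl
      · rw [if_neg hr]
  refine ⟨h1, ?_⟩
  -- step 2 : zthresh = zsimple
  have h2 : zthresh = zsimple := by
    have s_def : ∀ t : Fin B, t ∈ (Finset.univ.filter fun t : Fin B => 0 < t.val) ↔ 0 < t.val := by
      intro t; simp
    have hscard : (Finset.univ.filter fun t : Fin B => 0 < t.val).card = B - 1 := by
      have : (Finset.univ.filter fun t : Fin B => 0 < t.val)
          = Finset.univ.erase (⟨0, hB0⟩ : Fin B) := by
        ext t
        simp [Fin.ext_iff]
        omega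
      rw [this, Finset.card_erase_of_mem (Finset.mem_univ _), Finset.card_univ, Fintype.card_fin]
    -- y computations
    have hy0 : ∀ t : Fin B, 0 < t.val → ∀ r : Fin B, r.val = 0 →
        y t r = decide (k ⟨0, hB0⟩ = true ∨ k t = true) := by
      intro t ht r hr
      have hrt : r ≠ t := by
        intro h; rw [h] at hr; omega
      show decide ((0 : ℤ) ≤ (moveFrontInt B t k : ℤ)
        - 2 ^ (B - 2) * (if r.val = 0 then 1 else 0)
        - 2 ^ (B - 1) * (if r = t then 1 else 0)) = _
      rw [if_pos hr, if_neg hrt, mul_one, mul_zero, sub_zero]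
      have hiff : ((0 : ℤ) ≤ (moveFrontInt B t k : ℤ) - 2 ^ (B - 2))
          ↔ 2 ^ (B - 2) ≤ moveFrontInt B t k := by
        rw [sub_nonneg]
        exact_mod_cast Iff.rfl
      have hrw : decide ((0 : ℤ) ≤ (moveFrontInt B t k : ℤ) - 2 ^ (B - 2))
          = decide (2 ^ (B - 2) ≤ moveFrontInt B t k) := decide_eq_decide.mpr hiff
      rw [hrw]
      cases h0 : k ⟨0, hB0⟩ <;> cases hkt : k t
      · have hlt := sd16_w_lt' B hB t k ht h0 hkt
        rw [decide_eq_decide]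
        simp; omega
      · rw [decide_eq_decide]
        simp only [hkt]
        simp only [eq_self_iff_true, or_true, iff_true]
        exact le_trans hpow (sd16_w_ge B t k hkt)
      · rw [decide_eq_decide]
        simp only [h0, eq_self_iff_true, true_or, iff_true]
        exact sd16_w_ge' B hB t k ht h0
      · rw [decide_eq_decide]
        simp only [h0, eq_self_iff_true, true_or, iff_true]
        exact sd16_w_ge' B hB t k ht h0
    have hy1 : ∀ t r : Fin B, r.val ≠ 0 → t ≠ r → y t r = true := by
      intro t r hr htr
      show decide ((0 : ℤ) ≤ (moveFrontInt B t k : ℤ)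
        - 2 ^ (B - 2) * (if r.val = 0 then 1 else 0)
        - 2 ^ (B - 1) * (if r = t then 1 else 0)) = true
      rw [if_neg hr, if_neg (Ne.symm htr), mul_zero, mul_zero, sub_zero, sub_zero,
        decide_eq_true_eq]
      exact Int.natCast_nonneg _
    have hy2 : ∀ r : Fin B, r.val ≠ 0 → y r r = k r := by
      intro r hr
      show decide ((0 : ℤ) ≤ (moveFrontInt B r k : ℤ)
        - 2 ^ (B - 2) * (if r.val = 0 then 1 else 0)
        - 2 ^ (B - 1) * (if r = r then 1 else 0)) = k r
      rw [if_neg hr, if_pos rfl, mul_zero, mul_one, sub_zero]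
      have hiff : ((0 : ℤ) ≤ (moveFrontInt B r k : ℤ) - 2 ^ (B - 1))
          ↔ 2 ^ (B - 1) ≤ moveFrontInt B r k := by
        rw [sub_nonneg]
        exact_mod_cast Iff.rfl
      have hrw : decide ((0 : ℤ) ≤ (moveFrontInt B r k : ℤ) - 2 ^ (B - 1))
          = decide (2 ^ (B - 1) ≤ moveFrontInt B r k) := decide_eq_decide.mpr hiff
      rw [hrw]
      cases hkr : k r
      · have := sd16_w_lt B hB r k hkr
        simp; omega
      · simp [sd16_w_ge B r k hkr]
    funext r
    by_cases hr : r.val = 0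
    · show decide (B - 1 ≤ ((Finset.univ.filter fun t : Fin B => 0 < t.val).sum
        fun t => if y t r then 1 else 0)) = _
      have hsum : ((Finset.univ.filter fun t : Fin B => 0 < t.val).sum
          fun t => if y t r then 1 else 0)
          = ((Finset.univ.filter fun t : Fin B => 0 < t.val).filter
              (fun t => k ⟨0, hB0⟩ = true ∨ k t = true)).card := by
        rw [Finset.card_filter]
        apply Finset.sum_congr rfl
        intro t ht
        rw [hy0 t ((s_def t).mp ht) r hr]
        simp
      rw [hsum]
      have hzs : zsimple r = decide (∀ t : Fin B, 0 < t.val →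
          (k ⟨0, hB0⟩ = true ∨ k t = true)) := by
        show (if r.val = 0 then _ else _) = _
        rw [if_pos hr]
      rw [hzs, decide_eq_decide]
      constructor
      · intro h t ht
        have hfil : ((Finset.univ.filter fun t : Fin B => 0 < t.val).filter
            (fun t => k ⟨0, hB0⟩ = true ∨ k t = true))
            = (Finset.univ.filter fun t : Fin B => 0 < t.val) := by
          apply Finset.eq_of_subset_of_card_le (Finset.filter_subset _ _)
          rw [hscard]; exact h
        have : t ∈ ((Finset.univ.filter fun t : Fin B => 0 < t.val).filter
            (fun t => k ⟨0, hB0⟩ = true ∨ k t = true)) := by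
          rw [hfil]; exact (s_def t).mpr ht
        exact (Finset.mem_filter.mp this).2
      · intro h
        have hfil : ((Finset.univ.filter fun t : Fin B => 0 < t.val).filter
            (fun t => k ⟨0, hB0⟩ = true ∨ k t = true))
            = (Finset.univ.filter fun t : Fin B => 0 < t.val) :=
          Finset.filter_eq_self.mpr (fun t ht => h t ((s_def t).mp ht))
        rw [hfil, hscard]
    · show decide (B - 1 ≤ ((Finset.univ.filter fun t : Fin B => 0 < t.val).sum
        fun t => if y t r then 1 else 0)) = _
      have hrs : r ∈ (Finset.univ.filter fun t : Fin B => 0 < t.val) :=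
        (s_def r).mpr (by omega)
      have hsum : ((Finset.univ.filter fun t : Fin B => 0 < t.val).sum
          fun t => if y t r then 1 else 0)
          = (B - 2) + (if k r then 1 else 0) := by
        rw [← Finset.sum_erase_add _ _ hrs, hy2 r hr]
        congr 1
        have : ∀ t ∈ (Finset.univ.filter fun t : Fin B => 0 < t.val).erase r,
            (if y t r then (1:ℕ) else 0) = 1 := by
          intro t ht
          rw [hy1 t r hr (Finset.mem_erase.mp ht).1]
          simp
        rw [Finset.sum_congr rfl this, Finset.sum_const, smul_eq_mul, mul_one,
          Finset.card_erase_of_mem hrs, hscard]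
        omega
      rw [hsum]
      have hzs : zsimple r = k r := by
        show (if r.val = 0 then _ else _) = _
        rw [if_neg hr]
      rw [hzs]
      cases hkr : k r <;> simp <;> omega
  rw [h2, h1]
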